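/- Suppose θ₁, θ₂ ∈ [0,2], μ₁, μ₂ ∈ ℝ, σ₁, σ₂ > 0, and K_{θ₁,μ₁,σ₁}(t) = K_{θ₂,μ₂,σ₂}(t) for all t in some interval (a, ∞), where K_{θ,μ,σ}(t) = exp(−(Λ_θ(t)−μ)²/(2σ²))·Λ'_θ(t) and Λ_θ is the Yeo–Johnson transformation. Then (θ₁, μ₁, σ₁) = (θ₂, μ₂, σ₂). -/

import Mathlib

open Filter Real Topology Asymptotics

/-- The Yeo–Johnson transformation. -/
noncomputable def YJ (θ t : ℝ) : ℝ :=
  if 0 ≤ t then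
    if θ = 0 then Real.log (t + 1) else ((t + 1) ^ θ - 1) / θ
  else
    if θ = 2 then -Real.log (-t + 1) else -(((-t + 1) ^ (2 - θ) - 1) / (2 - θ))


/-- The derivative of the Yeo–Johnson transformation. -/
noncomputable def YJderiv (θ t : ℝ) : ℝ :=
  if 0 ≤ t then (t + 1) ^ (θ - 1) else (1 - t) ^ (1 - θ)

/-- The function `K_{θ,μ,σ}` from Assumption (A7). -/
noncomputable def Kfun (θ μ σ t : ℝ) : ℝ :=
  Real.exp (-(YJ θ t - μ) ^ 2 / (2 * σ ^ 2)) * YJderiv θ t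

/-- The Yeo–Johnson transform on the positive half line, as a function of `y = t + 1`. -/
noncomputable def Lfun (θ y : ℝ) : ℝ := if θ = 0 then Real.log y else (y ^ θ - 1) / θ

lemma YJ_of_nonneg {θ t : ℝ} (ht : 0 ≤ t) : YJ θ t = Lfun θ (t + 1) := by
  simp [YJ, Lfun, if_pos ht]

lemma YJderiv_of_nonneg {θ t : ℝ} (ht : 0 ≤ t) : YJderiv θ t = (t + 1) ^ (θ - 1) := by
  simp [YJderiv, if_pos ht]

lemma tendsto_inv_rpow {r : ℝ} (hr : 0 < r) :
    Tendsto (fun y : ℝ => (y ^ r)⁻¹) atTop (nhds 0) :=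
  (tendsto_rpow_atTop hr).inv_tendsto_atTop

lemma tendsto_const_div_rpow {r : ℝ} (hr : 0 < r) (c : ℝ) :
    Tendsto (fun y : ℝ => c / y ^ r) atTop (nhds 0) := by
  simpa using tendsto_const_nhds.mul (tendsto_inv_rpow hr) |>.congr
    (fun y => (div_eq_mul_inv c _).symm)

lemma L_div_tendsto_self {θ : ℝ} (hθ : 0 < θ) :
    Tendsto (fun y : ℝ => Lfun θ y / y ^ θ) atTop (nhds (1 / θ)) := by
  have h : ∀ᶠ y : ℝ in atTop, (1 - (y ^ θ)⁻¹) / θ = Lfun θ y / y ^ θ := by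
    filter_upwards [eventually_gt_atTop (0 : ℝ)] with y hy
    have hY : y ^ θ ≠ 0 := (Real.rpow_pos_of_pos hy θ).ne'
    simp only [Lfun, if_neg hθ.ne']
    rw [div_div, eq_div_iff (by positivity)]
    field_simp
  have h2 := ((tendsto_const_nhds.sub (tendsto_inv_rpow hθ)).div_const θ).congr' h
  simpa using h2

lemma L_div_tendsto_zero {θ₁ θ₂ : ℝ} (h0 : 0 ≤ θ₂) (hlt : θ₂ < θ₁) :
    Tendsto (fun y : ℝ => Lfun θ₂ y / y ^ θ₁) atTop (nhds 0) := by
  have hθ₁ : 0 < θ₁ := lt_of_le_of_lt h0 hlt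
  rcases eq_or_lt_of_le h0 with h | h
  · have := (isLittleO_log_rpow_atTop hθ₁).tendsto_div_nhds_zero
    refine this.congr (fun y => ?_)
    simp [Lfun, ← h]
  · have key : ∀ᶠ y : ℝ in atTop,
        (y ^ (-(θ₁ - θ₂)) - (y ^ θ₁)⁻¹) / θ₂ = Lfun θ₂ y / y ^ θ₁ := by
      filter_upwards [eventually_gt_atTop (0 : ℝ)] with y hy
      have hY : y ^ θ₁ ≠ 0 := (Real.rpow_pos_of_pos hy θ₁).ne'
      have hsub : y ^ (-(θ₁ - θ₂)) = y ^ θ₂ / y ^ θ₁ := by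
        rw [neg_sub, Real.rpow_sub hy]
      simp only [Lfun, if_neg h.ne']
      rw [hsub, div_div, eq_div_iff (by positivity)]
      field_simp
    have h2 := (((tendsto_rpow_neg_atTop (by linarith : (0:ℝ) < θ₁ - θ₂)).sub
      (tendsto_inv_rpow hθ₁)).div_const θ₂).congr' key
    simpa using h2

lemma L_tendsto_atTop {θ : ℝ} (h0 : 0 ≤ θ) : Tendsto (Lfun θ) atTop atTop := by
  rcases eq_or_lt_of_le h0 with h | h
  · refine Real.tendsto_log_atTop.congr (fun y => ?_)
    simp [Lfun, ← h]
  · have := (tendsto_atTop_add_const_right atTop (-1 : ℝ) (tendsto_rpow_atTop h)).atTop_div_const h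
    refine this.congr (fun y => ?_)
    simp [Lfun, h.ne', sub_eq_add_neg]

/-- If `θ₂ < θ₁` then the polynomial identity coming from equality of log-densities
is impossible. -/
lemma no_lt (θ₁ θ₂ μ₁ μ₂ σ₁ σ₂ c : ℝ) (hσ₂ : 0 < σ₂)
    (h0 : 0 ≤ θ₂) (hlt : θ₂ < θ₁)
    (E : ∀ y : ℝ, c < y →
      σ₁ ^ 2 * (Lfun θ₂ y - μ₂) ^ 2 - σ₂ ^ 2 * (Lfun θ₁ y - μ₁) ^ 2
        = 2 * σ₁ ^ 2 * σ₂ ^ 2 * (θ₂ - θ₁) * Real.log y) : False := by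
  have hθ₁ : 0 < θ₁ := lt_of_le_of_lt h0 hlt
  set D : ℝ → ℝ := fun y =>
    σ₁ ^ 2 * (Lfun θ₂ y / y ^ θ₁ - μ₂ / y ^ θ₁) ^ 2
      - σ₂ ^ 2 * (Lfun θ₁ y / y ^ θ₁ - μ₁ / y ^ θ₁) ^ 2
      - 2 * σ₁ ^ 2 * σ₂ ^ 2 * (θ₂ - θ₁) * (Real.log y / (y ^ θ₁) ^ 2) with hD
  have hlog : Tendsto (fun y : ℝ => Real.log y / (y ^ θ₁) ^ 2) atTop (nhds 0) := by
    have := (isLittleO_log_rpow_atTop (by linarith : (0:ℝ) < θ₁ + θ₁)).tendsto_div_nhds_zero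
    refine this.congr' ?_
    filter_upwards [eventually_gt_atTop (0 : ℝ)] with y hy
    rw [Real.rpow_add hy, sq]
  have h1 : Tendsto D atTop (nhds (-(σ₂ ^ 2 * (1 / θ₁) ^ 2))) := by
    have t1 := ((L_div_tendsto_zero h0 hlt).sub (tendsto_const_div_rpow hθ₁ μ₂)).pow 2
    have t2 := ((L_div_tendsto_self hθ₁).sub (tendsto_const_div_rpow hθ₁ μ₁)).pow 2
    have h3 := ((t1.const_mul (σ₁ ^ 2)).sub (t2.const_mul (σ₂ ^ 2))).sub
      (hlog.const_mul (2 * σ₁ ^ 2 * σ₂ ^ 2 * (θ₂ - θ₁)))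
    simpa [hD] using h3
  have h2 : Tendsto D atTop (nhds 0) := by
    have hev : ∀ᶠ y : ℝ in atTop, D y = 0 := by
      filter_upwards [eventually_gt_atTop (max c 0)] with y hy
      have hy0 : 0 < y := lt_of_le_of_lt (le_max_right c 0) hy
      have hyc : c < y := lt_of_le_of_lt (le_max_left c 0) hy
      have hY : y ^ θ₁ ≠ 0 := (Real.rpow_pos_of_pos hy0 θ₁).ne'
      have hE := E y hyc
      simp only [hD]
      have expand : σ₁ ^ 2 * (Lfun θ₂ y / y ^ θ₁ - μ₂ / y ^ θ₁) ^ 2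
          - σ₂ ^ 2 * (Lfun θ₁ y / y ^ θ₁ - μ₁ / y ^ θ₁) ^ 2
          - 2 * σ₁ ^ 2 * σ₂ ^ 2 * (θ₂ - θ₁) * (Real.log y / (y ^ θ₁) ^ 2)
          = (σ₁ ^ 2 * (Lfun θ₂ y - μ₂) ^ 2 - σ₂ ^ 2 * (Lfun θ₁ y - μ₁) ^ 2
              - 2 * σ₁ ^ 2 * σ₂ ^ 2 * (θ₂ - θ₁) * Real.log y) / (y ^ θ₁) ^ 2 := by
        field_simp
        try ring
      rw [expand, hE]
      simp
    exact Tendsto.congr' (hev.mono fun y h => h.symm) tendsto_const_nhds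
  have huniq := tendsto_nhds_unique h1 h2
  have hθ₁' : (1 / θ₁) ^ 2 > 0 := by positivity
  nlinarith [sq_nonneg σ₂, mul_pos (mul_pos hσ₂ hσ₂) hθ₁']

/-- Identifiability: if two `K`-densities agree on a half-line `(a, ∞)`, their
parameters coincide. -/
theorem Kfun_identifiable (θ₁ θ₂ μ₁ μ₂ σ₁ σ₂ a : ℝ)
    (hθ₁ : θ₁ ∈ Set.Icc (0 : ℝ) 2) (hθ₂ : θ₂ ∈ Set.Icc (0 : ℝ) 2)
    (hσ₁ : 0 < σ₁) (hσ₂ : 0 < σ₂)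
    (heq : ∀ t : ℝ, a < t → Kfun θ₁ μ₁ σ₁ t = Kfun θ₂ μ₂ σ₂ t) :
    θ₁ = θ₂ ∧ μ₁ = μ₂ ∧ σ₁ = σ₂ := by
  set c : ℝ := max a 0 + 1 with hc
  -- the log-equality on (c, ∞)
  have key : ∀ y : ℝ, c < y →
      -(Lfun θ₁ y - μ₁) ^ 2 / (2 * σ₁ ^ 2) + (θ₁ - 1) * Real.log y
        = -(Lfun θ₂ y - μ₂) ^ 2 / (2 * σ₂ ^ 2) + (θ₂ - 1) * Real.log y := by
    intro y hy
    have hmax0 : (0:ℝ) ≤ max a 0 := le_max_right a 0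
    have hmaxa : a ≤ max a 0 := le_max_left a 0
    have hy0 : 0 < y := by simp only [hc] at hy; linarith
    have ht : a < y - 1 := by simp only [hc] at hy; linarith
    have ht0 : 0 ≤ y - 1 := by simp only [hc] at hy; linarith
    have h := heq (y - 1) ht
    have harg : y - 1 + 1 = y := by ring
    rw [Kfun, Kfun, YJ_of_nonneg ht0, YJ_of_nonneg ht0, YJderiv_of_nonneg ht0,
      YJderiv_of_nonneg ht0, harg] at h
    have h' := congrArg Real.log h
    rw [Real.log_mul (Real.exp_ne_zero _) (Real.rpow_pos_of_pos hy0 _).ne',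
      Real.log_mul (Real.exp_ne_zero _) (Real.rpow_pos_of_pos hy0 _).ne',
      Real.log_exp, Real.log_exp, Real.log_rpow hy0, Real.log_rpow hy0] at h'
    linarith [h']
  have hσ₁' : σ₁ ^ 2 ≠ 0 := by positivity
  have hσ₂' : σ₂ ^ 2 ≠ 0 := by positivity
  -- θ₁ = θ₂
  have hθeq : θ₁ = θ₂ := by
    by_contra hne
    rcases lt_or_gt_of_ne hne with h | h
    · refine no_lt θ₂ θ₁ μ₂ μ₁ σ₂ σ₁ c hσ₁ hθ₁.1 h (fun y hy => ?_)
      have hk := key y hy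
      field_simp at hk
      linarith [hk]
    · refine no_lt θ₁ θ₂ μ₁ μ₂ σ₁ σ₂ c hσ₂ hθ₂.1 h (fun y hy => ?_)
      have hk := key y hy
      field_simp at hk
      linarith [hk]
  -- now the quadratic coefficients
  subst hθeq
  set L : ℝ → ℝ := Lfun θ₁ with hL
  have hquad : ∀ y : ℝ, c < y →
      (σ₂ ^ 2 - σ₁ ^ 2) * (L y) ^ 2 + (-2 * (σ₂ ^ 2 * μ₁ - σ₁ ^ 2 * μ₂)) * (L y)
        + (σ₂ ^ 2 * μ₁ ^ 2 - σ₁ ^ 2 * μ₂ ^ 2) = 0 := by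
    intro y hy
    have hk := key y hy
    field_simp at hk
    nlinarith [hk]
  have hLtop : Tendsto L atTop atTop := L_tendsto_atTop hθ₁.1
  have hL2top : Tendsto (fun y => (L y) ^ 2) atTop atTop :=
    (tendsto_pow_atTop two_ne_zero).comp hLtop
  set A : ℝ := σ₂ ^ 2 - σ₁ ^ 2 with hA
  set B : ℝ := -2 * (σ₂ ^ 2 * μ₁ - σ₁ ^ 2 * μ₂) with hB
  set C : ℝ := σ₂ ^ 2 * μ₁ ^ 2 - σ₁ ^ 2 * μ₂ ^ 2 with hC
  have hev : ∀ᶠ y : ℝ in atTop, A + B / L y + C / (L y) ^ 2 = 0 := by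
    filter_upwards [eventually_gt_atTop c, hLtop.eventually_ge_atTop 1] with y hy hLy
    have hLne : L y ≠ 0 := by linarith
    have hq := hquad y hy
    field_simp
    linear_combination hq
  have htend : Tendsto (fun y => A + B / L y + C / (L y) ^ 2) atTop (nhds A) := by
    have t1 : Tendsto (fun y => B / L y) atTop (nhds 0) := tendsto_const_nhds.div_atTop hLtop
    have t2 : Tendsto (fun y => C / (L y) ^ 2) atTop (nhds 0) := tendsto_const_nhds.div_atTop hL2top
    simpa using (tendsto_const_nhds.add t1).add t2
  have hA0 : A = 0 := by
    have h0 : Tendsto (fun y => A + B / L y + C / (L y) ^ 2) atTop (nhds 0) :=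
      Tendsto.congr' (hev.mono fun y h => h.symm) tendsto_const_nhds
    exact tendsto_nhds_unique htend h0
  have hevB : ∀ᶠ y : ℝ in atTop, B + C / L y = 0 := by
    filter_upwards [eventually_gt_atTop c, hLtop.eventually_ge_atTop 1] with y hy hLy
    have hLne : L y ≠ 0 := by linarith
    have hq := hquad y hy
    rw [hA0] at hq
    field_simp
    linear_combination hq
  have htendB : Tendsto (fun y => B + C / L y) atTop (nhds B) := by
    have t1 : Tendsto (fun y => C / L y) atTop (nhds 0) := tendsto_const_nhds.div_atTop hLtop
    simpa using tendsto_const_nhds.add t1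
  have hB0 : B = 0 := by
    have h0 : Tendsto (fun y => B + C / L y) atTop (nhds 0) :=
      Tendsto.congr' (hevB.mono fun y h => h.symm) tendsto_const_nhds
    exact tendsto_nhds_unique htendB h0
  have hσeq : σ₁ = σ₂ := by
    have h : (σ₁ - σ₂) * (σ₁ + σ₂) = 0 := by
      rw [hA] at hA0; linear_combination -hA0
    rcases mul_eq_zero.1 h with h' | h'
    · linarith
    · linarith
  have hμeq : μ₁ = μ₂ := by
    rw [hB, hσeq] at hB0
    have h : σ₂ ^ 2 * (μ₂ - μ₁) = 0 := by linear_combination hB0 / 2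
    rcases mul_eq_zero.1 h with h' | h'
    · exact absurd h' (by positivity)
    · linarith
  exact ⟨rfl, hμeq, hσeq⟩
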